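/- Suppose P_L = 1/2, B < B_PA, and there exists c₀ ∈ (0, c_max) with 2·(P_H − P_L)·F(c₀) ≥ c₀/(B·(P_H − P_L)). Then there is exactly one c* ∈ (0, c_max) satisfying 2·(P_H − P_L)·F(c*) = c*/(B·(P_H − P_L)), equivalently B = c*/(2·F(c*)·(P_H − P_L)²). -/

import Mathlib

open Set

/-- When `P_L = 1/2`, `B < B_PA` and the LHS of the PA equilibrium equation reaches the RHS
somewhere in `(0, c_max)`, then there is exactly one `c* ∈ (0, c_max)` solving
the PA equilibrium equation. -/
theorem pa_unique_interior_equilibrium_half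
    (c_max P_L P_H B : ℝ) (F : ℝ → ℝ)
    (hcmax : 0 < c_max)
    (hFcont : ContinuousOn F (Icc 0 c_max))
    (hFmono : MonotoneOn F (Icc 0 c_max))
    (hF0 : F 0 = 0) (hFmax : F c_max = 1)
    (hFconc : StrictConcaveOn ℝ (Icc 0 c_max) F)
    (hPL : P_L = 1 / 2) (hPLH : P_L < P_H) (hPH : P_H ≤ 1)
    (hBpos : 0 < B)
    (hB : B < c_max / ((2 * P_H - 1) * (P_H - P_L)))
    (hexists : ∃ c₀ ∈ Ioo 0 c_max,
      2 * (P_H - P_L) * F c₀ ≥ c₀ / (B * (P_H - P_L))) :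
    ∃! c : ℝ, c ∈ Ioo 0 c_max ∧
      2 * (P_H - P_L) * F c = c / (B * (P_H - P_L)) := by
  have hp : 0 < P_H - P_L := by linarith
  set p := P_H - P_L with hpdef
  have hk : 0 < 2 * B * p ^ 2 := by positivity
  have hkne : (2 * B * p ^ 2) ≠ 0 := ne_of_gt hk
  have hBpne : B * p ≠ 0 := by positivity
  have key : ∀ c : ℝ, (2 * p * F c = c / (B * p)) ↔ F c = c / (2 * B * p ^ 2) := by
    intro c
    rw [eq_div_iff hBpne, eq_div_iff hkne]
    constructor <;> intro h <;> nlinarith [h]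
  have h2p : 2 * P_H - 1 = 2 * p := by rw [hpdef, hPL]; ring
  have hBc : 2 * B * p ^ 2 < c_max := by
    rw [h2p] at hB
    have := (lt_div_iff₀ (by positivity : (0:ℝ) < 2 * p * p)).mp hB
    nlinarith [this]
  obtain ⟨c₀, ⟨hc₀0, hc₀m⟩, hge⟩ := hexists
  have hge' : F c₀ ≥ c₀ / (2 * B * p ^ 2) := by
    rw [ge_iff_le, div_le_iff₀ hk]
    rw [ge_iff_le, div_le_iff₀ (by positivity : (0:ℝ) < B * p)] at hge
    nlinarith [hge]
  set G : ℝ → ℝ := fun c => F c - c / (2 * B * p ^ 2) with hGdef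
  have hGcont : ContinuousOn G (Icc 0 c_max) := by
    apply hFcont.sub
    exact (continuous_id.div_const _).continuousOn
  have hGmax : G c_max < 0 := by
    simp only [hGdef, hFmax]
    have : 1 < c_max / (2 * B * p ^ 2) := (one_lt_div hk).mpr hBc
    linarith
  have hGc₀ : 0 ≤ G c₀ := by simp only [hGdef]; linarith
  have hsub : Icc c₀ c_max ⊆ Icc 0 c_max := Icc_subset_Icc hc₀0.le le_rfl
  have hivt := intermediate_value_Icc' hc₀m.le (hGcont.mono hsub)
  have h0mem : (0:ℝ) ∈ Icc (G c_max) (G c₀) := ⟨hGmax.le, hGc₀⟩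
  obtain ⟨c, hcmem, hGc⟩ := hivt h0mem
  have hcpos : 0 < c := lt_of_lt_of_le hc₀0 hcmem.1
  have hcne : c ≠ c_max := by
    intro h; rw [h] at hGc; rw [hGc] at hGmax; exact lt_irrefl 0 hGmax
  have hclt : c < c_max := lt_of_le_of_ne hcmem.2 hcne
  have hFc : F c = c / (2 * B * p ^ 2) := by
    have : F c - c / (2 * B * p ^ 2) = 0 := hGc
    linarith
  have claim : ∀ a b : ℝ, 0 < a → a < b → b ≤ c_max →
      F a = a / (2 * B * p ^ 2) → F b = b / (2 * B * p ^ 2) → False := by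
    intro a b ha hab hbm hFa hFb
    have hb0 : 0 < b := lt_trans ha hab
    have hmem0 : (0:ℝ) ∈ Icc 0 c_max := ⟨le_rfl, hcmax.le⟩
    have hmemb : b ∈ Icc 0 c_max := ⟨hb0.le, hbm⟩
    have hta : 0 < (b - a) / b := div_pos (by linarith) hb0
    have hsa : 0 < a / b := by positivity
    have hsum : (b - a) / b + a / b = 1 := by field_simp; ring
    have hcc := hFconc.2 hmem0 hmemb (by linarith : (0:ℝ) ≠ b) hta hsa hsum
    simp only [smul_eq_mul, mul_zero, hF0, zero_add] at hcc
    have harg : a / b * b = a := by field_simp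
    rw [harg, hFa, hFb] at hcc
    have heq : a / b * (b / (2 * B * p ^ 2)) = a / (2 * B * p ^ 2) := by
      field_simp
    rw [heq] at hcc
    exact lt_irrefl _ hcc
  refine ⟨c, ⟨⟨hcpos, hclt⟩, (key c).mpr hFc⟩, ?_⟩
  rintro y ⟨⟨hy0, hym⟩, hyEq⟩
  have hFy : F y = y / (2 * B * p ^ 2) := (key y).mp hyEq
  rcases lt_trichotomy y c with h | h | h
  · exact absurd (claim y c hy0 h hclt.le hFy hFc) id
  · exact h
  · exact absurd (claim c y hcpos h hym.le hFc hFy) id
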